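/- Let ℓ(n) be the Lucas numbers (ℓ(1)=1, ℓ(2)=3, ℓ(n)=ℓ(n-1)+ℓ(n-2)). For any sequence s = (s_1,...,s_n) with n ≥ 2 and each s_i ∈ {0,1,2}, the number of binary sequences (x_1,...,x_n) ∈ {0,1}^n satisfying x_i + x_{i+1} ≠ s_i for all 1 ≤ i < n and x_n + x_1 ≠ s_n is at most ℓ(n). -/

import Mathlib

/-- The Lucas numbers: `ℓ(n) = φ(n-1) + φ(n+1)` where `φ` is the Fibonacci sequence. -/
def lucas : ℕ → ℕ
  | 0 => 2
  | n + 1 => Nat.fib n + Nat.fib (n + 2)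

open Nat

namespace Statement9Aux

def pcount : Fin 2 → List (Fin 3) → Fin 2 → ℕ
  | u, [], v => if u = v then 1 else 0
  | u, s :: t, v => ∑ w : Fin 2, if (u : ℕ) + (w : ℕ) ≠ (s : ℕ) then pcount w t v else 0

lemma pcount_one (t : List (Fin 3)) (u v : Fin 2) :
    pcount u ((1:Fin 3) :: t) v = pcount u t v := by
  fin_cases u <;> simp [pcount, Fin.sum_univ_two]

lemma pcount_filter (t : List (Fin 3)) (u v : Fin 2) :
    pcount u t v = pcount u (t.filter (· ≠ 1)) v := by
  induction t generalizing u with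
  | nil => rfl
  | cons s t ih =>
    by_cases hs : s = 1
    · subst hs
      simp only [List.filter_cons, ne_eq, not_true_eq_false, decide_false, if_false, pcount_one]
      exact ih u
    · simp only [List.filter_cons, ne_eq, hs, not_false_eq_true, decide_true, if_true]
      simp only [pcount]
      exact Finset.sum_congr rfl fun w _ => by rw [ih w]

lemma pcount_zero (t : List (Fin 3)) (v : Fin 2) :
    pcount 0 ((0:Fin 3) :: t) v = pcount 1 t v ∧
    pcount 1 ((0:Fin 3) :: t) v = pcount 0 t v + pcount 1 t v := by
  constructor <;> simp [pcount, Fin.sum_univ_two]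

lemma pcount_two (t : List (Fin 3)) (v : Fin 2) :
    pcount 0 ((2:Fin 3) :: t) v = pcount 0 t v + pcount 1 t v ∧
    pcount 1 ((2:Fin 3) :: t) v = pcount 0 t v := by
  constructor <;> simp [pcount, Fin.sum_univ_two]

lemma lucas_succ (n : ℕ) : lucas (n+1) = fib n + fib (n+2) := rfl

lemma fib_flat (j : ℕ) : fib (j+2) = fib j + fib (j+1) := fib_add_two

lemma lucas_rec (k : ℕ) : lucas (k+1) + lucas k = lucas (k+2) := by
  cases k with
  | zero => simp [lucas, fib]
  | succ j =>
    rw [lucas_succ, lucas_succ, lucas_succ]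
    simp only [show j+1+2 = j+3 from by omega, show j+2+2 = j+4 from by omega]
    have h1 := fib_flat j
    have h2 := fib_flat (j+1)
    have h3 := fib_flat (j+2)
    simp only [show j+1+2 = j+3 from by omega, show j+2+2 = j+4 from by omega,
      show j+1+1 = j+2 from by omega, show j+2+1 = j+3 from by omega] at h2 h3
    omega

lemma lucas_mono {m n : ℕ} (hm : 1 ≤ m) (hmn : m ≤ n) : lucas m ≤ lucas n := by
  obtain ⟨m', rfl⟩ : ∃ m', m = m' + 1 := ⟨m - 1, by omega⟩
  obtain ⟨n', rfl⟩ : ∃ n', n = n' + 1 := ⟨n - 1, by omega⟩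
  rw [lucas_succ, lucas_succ]
  have := fib_mono (show m' ≤ n' by omega)
  have := fib_mono (show m'+2 ≤ n'+2 by omega)
  omega

lemma two_le_lucas {n : ℕ} (hn : 2 ≤ n) : 2 ≤ lucas n := by
  have : lucas 2 ≤ lucas n := lucas_mono (by omega) hn
  have : lucas 2 = 3 := by simp [lucas, fib]
  omega

lemma invariants (T : List (Fin 3)) (hne : T ≠ []) (h1 : ∀ r ∈ T, r ≠ 1) :
    pcount 0 T 0 + pcount 0 T 1 + pcount 1 T 0 ≤ lucas (T.length + 1) ∧
    pcount 0 T 1 + pcount 1 T 0 + pcount 1 T 1 ≤ lucas (T.length + 1) ∧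
    pcount 0 T 0 + pcount 1 T 1 ≤ lucas T.length ∧
    pcount 0 T 0 + pcount 1 T 0 ≤ fib (T.length + 2) ∧
    pcount 0 T 1 + pcount 1 T 1 ≤ fib (T.length + 2) ∧
    pcount 0 T 0 ≤ fib (T.length + 1) ∧ pcount 0 T 1 ≤ fib (T.length + 1) ∧
    pcount 1 T 0 ≤ fib (T.length + 1) ∧ pcount 1 T 1 ≤ fib (T.length + 1) := by
  induction T with
  | nil => exact absurd rfl hne
  | cons r t ih =>
    have hr : r = 0 ∨ r = 2 := by
      have := h1 r List.mem_cons_self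
      fin_cases r <;> simp_all
    have h1t : ∀ x ∈ t, x ≠ 1 := fun x hx => h1 x (List.mem_cons_of_mem r hx)
    cases t with
    | nil =>
      rcases hr with rfl | rfl <;>
        simp [pcount, Fin.sum_univ_two, lucas, fib]
    | cons r' t' =>
      set t := r' :: t' with ht
      obtain ⟨i1, i2, i3, i4, i5, i6, i7, i8, i9⟩ := ih (by simp [ht]) h1t
      obtain ⟨j, hj⟩ : ∃ j, t.length = j + 1 := ⟨t'.length, by simp [ht]⟩
      rw [hj] at i1 i2 i3 i4 i5 i6 i7 i8 i9
      have len : (r :: t).length = j + 2 := by simp [ht] at hj ⊢; omega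
      rw [len]
      have g1 : lucas (j+2+1) = fib (j+2) + fib (j+2+2) := lucas_succ (j+2)
      have g2 : lucas (j+2) = fib (j+1) + fib (j+1+2) := lucas_succ (j+1)
      have g3 : lucas (j+1+1) = fib (j+1) + fib (j+1+2) := lucas_succ (j+1)
      have g4 : lucas (j+1) = fib j + fib (j+2) := lucas_succ j
      rw [g1, g2] ; rw [g3] at i1 i2 ; rw [g4] at i3
      have f0 : fib j ≤ fib (j+1) := fib_mono (by omega)
      have f0' : fib (j+1) ≤ fib (j+2) := fib_mono (by omega)
      have fm := fib_flat j
      have f1 := fib_flat (j+1)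
      have f2 := fib_flat (j+2)
      have f3 := fib_flat (j+3)
      simp only [show j+1+1 = j+2 from by omega, show j+1+2 = j+3 from by omega,
        show j+2+1 = j+3 from by omega, show j+2+2 = j+4 from by omega,
        show j+3+1 = j+4 from by omega, show j+3+2 = j+5 from by omega]
        at f1 f2 f3 i1 i2 i3 i4 i5 i6 i7 i8 i9 ⊢
      rcases hr with rfl | rfl
      · obtain ⟨e0, _⟩ := pcount_zero t 0
        obtain ⟨e0', _⟩ := pcount_zero t 1
        obtain ⟨_, e1⟩ := pcount_zero t 0
        obtain ⟨_, e1'⟩ := pcount_zero t 1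
        rw [e0, e0', e1, e1']
        omega
      · obtain ⟨e0, _⟩ := pcount_two t 0
        obtain ⟨e0', _⟩ := pcount_two t 1
        obtain ⟨_, e1⟩ := pcount_two t 0
        obtain ⟨_, e1'⟩ := pcount_two t 1
        rw [e0, e0', e1, e1']
        omega

/-- prepend a vertex to a path -/
def ext {m : ℕ} (u : Fin 2) (y : Fin m → Fin 2) : Fin (m+1) → Fin 2 := Fin.cons u y

@[simp] lemma ext_zero {m : ℕ} (u : Fin 2) (y : Fin m → Fin 2) : ext u y 0 = u := rfl
@[simp] lemma ext_succ {m : ℕ} (u : Fin 2) (y : Fin m → Fin 2) (i : Fin m) :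
    ext u y i.succ = y i := by simp [ext]

def pathgood {m : ℕ} (c : Fin m → Fin 3) (u v : Fin 2) (y : Fin m → Fin 2) : Prop :=
  (∀ i : Fin m, ((ext u y i.castSucc : ℕ) + (ext u y i.succ : ℕ) ≠ (c i : ℕ)))
    ∧ ext u y (Fin.last m) = v

instance {m : ℕ} (c : Fin m → Fin 3) (u v : Fin 2) : DecidablePred (pathgood c u v) :=
  fun _ => by unfold pathgood; infer_instance

lemma card_paths (m : ℕ) (c : Fin m → Fin 3) (u v : Fin 2) :
    (Finset.univ.filter (pathgood c u v)).card = pcount u (List.ofFn c) v := by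
  induction m generalizing u with
  | zero =>
    simp only [List.ofFn_zero, pcount]
    have : (Finset.univ : Finset (Fin 0 → Fin 2)) = {fun i => i.elim0} := by
      apply Finset.eq_singleton_iff_unique_mem.2
      exact ⟨Finset.mem_univ _, fun y _ => funext fun i => i.elim0⟩
    rw [this, Finset.filter_singleton]
    by_cases huv : u = v
    · subst huv
      have hg : pathgood c u u (fun i => i.elim0) := by
        constructor
        · exact fun i => i.elim0
        · show ext u _ 0 = u; simp
      rw [if_pos hg]
      simp
    · have : ¬ pathgood c u v (fun i => i.elim0) := by
        intro ⟨_, h2⟩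
        exact huv (by simpa using h2.symm ▸ (rfl : ext u (fun i => i.elim0) 0 = u))
      simp [this, huv]
  | succ m ih =>
    rw [List.ofFn_succ]
    show _ = ∑ w : Fin 2, if (u : ℕ) + (w : ℕ) ≠ (c 0 : ℕ) then pcount w (List.ofFn fun i => c i.succ) v else 0
    rw [Finset.card_filter]
    rw [← Fintype.sum_equiv (Fin.consEquiv (fun _ : Fin (m+1) => Fin 2))
      (fun p => if pathgood c u v (Fin.consEquiv _ p) then (1:ℕ) else 0) _ (fun p => rfl)]
    rw [Fintype.sum_prod_type]
    refine Finset.sum_congr rfl fun w _ => ?_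
    rw [← ih (fun i => c i.succ) w, Finset.card_filter]
    by_cases hw : (u : ℕ) + (w : ℕ) ≠ (c 0 : ℕ)
    · rw [if_pos hw]
      refine Finset.sum_congr rfl fun ty _ => ?_
      have hcons : (Fin.consEquiv (fun _ : Fin (m+1) => Fin 2)) (w, ty) = ext w ty := rfl
      rw [hcons]
      refine if_congr ?_ rfl rfl
      show pathgood c u v (ext w ty) ↔ pathgood (fun i => c i.succ) w v ty
      constructor
      · rintro ⟨hc, hl⟩
        refine ⟨fun i => ?_, ?_⟩
        · have := hc i.succ
          rwa [← Fin.succ_castSucc, ext_succ, ext_succ] at this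
        · have : Fin.last (m+1) = (Fin.last m).succ := rfl
          rwa [this, ext_succ] at hl
      · rintro ⟨hc, hl⟩
        refine ⟨fun i => ?_, ?_⟩
        · refine Fin.cases ?_ (fun i => ?_) i
          · rw [Fin.castSucc_zero, ext_zero, ext_succ, ext_zero]
            exact hw
          · rw [← Fin.succ_castSucc, ext_succ, ext_succ]
            exact hc i
        · have : Fin.last (m+1) = (Fin.last m).succ := rfl
          rwa [this, ext_succ]
    · rw [if_neg hw]
      refine Finset.sum_eq_zero fun ty _ => ?_
      rw [if_neg]
      rintro ⟨hc, -⟩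
      have hcons : (Fin.consEquiv (fun _ : Fin (m+1) => Fin 2)) (w, ty) = ext w ty := rfl
      have h0 := hc 0
      rw [Fin.castSucc_zero, ext_zero, ext_succ, hcons, ext_zero] at h0
      exact hw h0

section cyclic
variable {n : ℕ} [NeZero n]

-- Fact A
lemma factA (h1n : 1 < n) (u : Fin 2) (x : Fin n → Fin 2) (hx : x 0 = u) (i : Fin n) :
    ext u (fun j : Fin n => x (j + ⟨1, h1n⟩)) i.castSucc = x i := by
  rcases i with ⟨iv, hi⟩
  cases iv with
  | zero =>
    have h0 : (⟨0, hi⟩ : Fin n) = 0 := Fin.ext (by simp)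
    have h0' : (⟨0, hi⟩ : Fin n).castSucc = 0 := Fin.ext (by simp)
    rw [h0', ext_zero, h0, hx]
  | succ k =>
    have hk : k < n := by omega
    have h1 : (⟨k+1, hi⟩ : Fin n).castSucc = (⟨k, hk⟩ : Fin n).succ := by
      apply Fin.ext; simp
    rw [h1, ext_succ]
    congr 1
    apply Fin.ext
    rw [Fin.add_def]
    simpa using Nat.mod_eq_of_lt hi

-- Fact B
lemma factB (h1n : 1 < n) (u : Fin 2) (y : Fin n → Fin 2)
    (hl : ext u y (Fin.last n) = u) (i : Fin n) :
    ext u y ((i + ⟨1, h1n⟩).castSucc) = ext u y i.succ := by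
  rcases i with ⟨k, hk⟩
  by_cases hklt : k + 1 < n
  · congr 1
    apply Fin.ext
    rw [Fin.add_def]
    simpa using Nat.mod_eq_of_lt hklt
  · have hkeq : k + 1 = n := by omega
    have h1 : (⟨k, hk⟩ : Fin n) + ⟨1, by omega⟩ = 0 := by
      apply Fin.ext
      rw [Fin.add_def]
      simp [hkeq]
    have h2 : ((⟨k, hk⟩ : Fin n)).succ = Fin.last n := by
      apply Fin.ext; simp [Fin.last]; omega
    rw [h1, h2, hl]
    rfl

def cycgood (hn : 2 ≤ n) (s : Fin n → Fin 3) (x : Fin n → Fin 2) : Prop :=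
  ∀ i : Fin n, ((x i : ℕ) + (x (i + ⟨1, Nat.lt_of_lt_of_le Nat.one_lt_two hn⟩) : ℕ)) ≠ (s i : ℕ)

instance (hn : 2 ≤ n) (s : Fin n → Fin 3) : DecidablePred (cycgood hn s) :=
  fun _ => by unfold cycgood; infer_instance

lemma card_cyc_fiber (hn : 2 ≤ n) (s : Fin n → Fin 3) (u : Fin 2) :
    (Finset.univ.filter fun x : Fin n → Fin 2 => cycgood hn s x ∧ x 0 = u).card
      = pcount u (List.ofFn s) u := by
  rw [← card_paths n s u u]
  have one_lt : (1 : ℕ) < n := by omega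
  refine Finset.card_bij' (fun x _ => fun i : Fin n => x (i + ⟨1, one_lt⟩))
    (fun y _ => fun i : Fin n => ext u y i.castSucc) ?_ ?_ ?_ ?_
  · -- forward maps into pathgood
    intro x hx
    rw [Finset.mem_filter] at hx ⊢
    obtain ⟨-, hc, h0⟩ := hx
    refine ⟨Finset.mem_univ _, fun i => ?_, ?_⟩
    · show ((ext u (fun j : Fin n => x (j + ⟨1, one_lt⟩)) i.castSucc : Fin 2) : ℕ) + _ ≠ _
      rw [factA one_lt u x h0 i, ext_succ]
      exact hc i
    · have h2 : (Fin.last n) = (⟨n-1, by omega⟩ : Fin n).succ := by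
        apply Fin.ext; simp; omega
      rw [h2, ext_succ]
      have h3 : (⟨n-1, by omega⟩ : Fin n) + ⟨1, one_lt⟩ = 0 := by
        apply Fin.ext
        rw [Fin.add_def]
        simp only [Fin.val_zero]
        rw [show n - 1 + 1 = n by omega, Nat.mod_self]
      show x ((⟨n - 1, by omega⟩ : Fin n) + ⟨1, one_lt⟩) = u
      rw [h3, h0]
  · -- backward maps into cycgood
    intro y hy
    rw [Finset.mem_filter] at hy ⊢
    obtain ⟨-, hc, hl⟩ := hy
    refine ⟨Finset.mem_univ _, fun i => ?_, ?_⟩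
    · show ((ext u y i.castSucc : Fin 2) : ℕ) + ((ext u y ((i + ⟨1, one_lt⟩).castSucc) : Fin 2) : ℕ) ≠ (s i : ℕ)
      rw [factB one_lt u y hl i]
      exact hc i
    · show ext u y (Fin.castSucc 0) = u
      rfl
  · -- left inverse
    intro x hx
    rw [Finset.mem_filter] at hx
    obtain ⟨-, -, h0⟩ := hx
    funext i
    exact factA one_lt u x h0 i
  · -- right inverse
    intro y hy
    rw [Finset.mem_filter] at hy
    obtain ⟨-, -, hl⟩ := hy
    funext i
    show ext u y ((i + ⟨1, one_lt⟩).castSucc) = y i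
    rw [factB one_lt u y hl i, ext_succ]

lemma card_cyclic (hn : 2 ≤ n) (s : Fin n → Fin 3) :
    (Finset.univ.filter fun x : Fin n → Fin 2 => cycgood hn s x).card
      = pcount 0 (List.ofFn s) 0 + pcount 1 (List.ofFn s) 1 := by
  rw [← card_cyc_fiber hn s 0, ← card_cyc_fiber hn s 1]
  rw [← Finset.card_union_of_disjoint]
  · congr 1
    ext x
    simp only [Finset.mem_union, Finset.mem_filter, Finset.mem_univ, true_and]
    have h2 : x 0 = 0 ∨ x 0 = 1 := by
      have := (x 0).isLt
      have h2' : (x 0 : ℕ) = 0 ∨ (x 0 : ℕ) = 1 := by omega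
      rcases h2' with h | h
      · exact Or.inl (Fin.ext (by simpa using h))
      · exact Or.inr (Fin.ext (by simpa using h))
    tauto
  · rw [Finset.disjoint_left]
    rintro x hx hx'
    rw [Finset.mem_filter] at hx hx'
    rw [hx.2.2] at hx'
    exact absurd hx'.2.2 (by decide)
end cyclic


end Statement9Aux

open Statement9Aux in
/-- For any sequence `s : Fin n → {0,1,2}` with `n ≥ 2`, the number of binary sequences
`x ∈ {0,1}ⁿ` with `x_i + x_{i+1} ≠ s_i` cyclically is at most the Lucas number `ℓ(n)`. -/
theorem statement_9 (n : ℕ) (hn : 2 ≤ n) (s : Fin n → Fin 3) :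
    {x : Fin n → Fin 2 |
        ∀ i : Fin n, ((x i : ℕ) + (x (i + ⟨1, by omega⟩) : ℕ)) ≠ (s i : ℕ)}.ncard
      ≤ lucas n := by
  haveI : NeZero n := ⟨by omega⟩
  have hset : {x : Fin n → Fin 2 |
        ∀ i : Fin n, ((x i : ℕ) + (x (i + ⟨1, by omega⟩) : ℕ)) ≠ (s i : ℕ)}
      = ↑(Finset.univ.filter (cycgood hn s)) := by
    ext x
    simp only [Set.mem_setOf_eq, Finset.coe_filter, Finset.mem_univ, true_and]
    exact Iff.rfl
  rw [hset, Set.ncard_coe_finset, card_cyclic hn s,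
    pcount_filter (List.ofFn s) 0 0, pcount_filter (List.ofFn s) 1 1]
  set T : List (Fin 3) := (List.ofFn s).filter (· ≠ 1) with hT
  have hlen : T.length ≤ n := by
    have := List.length_filter_le (· ≠ 1) (List.ofFn s)
    simpa [hT] using this
  by_cases hnil : T = []
  · rw [hnil]
    show ((if (0:Fin 2) = 0 then 1 else 0) + if (1:Fin 2) = 1 then 1 else 0) ≤ lucas n
    simp only [if_pos rfl]
    exact two_le_lucas hn
  · have hmem : ∀ r ∈ T, r ≠ 1 := by
      intro r hr
      rw [hT, List.mem_filter] at hr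
      simpa using hr.2
    obtain ⟨-, -, h3, -⟩ := invariants T hnil hmem
    calc pcount 0 T 0 + pcount 1 T 1 ≤ lucas T.length := h3
      _ ≤ lucas n := lucas_mono (by
          have : T ≠ [] := hnil
          have : 0 < T.length := List.length_pos_iff.mpr hnil
          omega) hlen
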